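/- arXiv:1107.3711 — 2 statements merged into one kernel-verified Lean document; each statement's English description precedes it below -/
import Mathlib

section
/- (Sinai's Lemma for countable Markov shifts) If ψ : Σ(G) → ℝ is weakly Hölder continuous with var₁ψ < ∞, then there exists a bounded Hölder continuous function φ' : Σ(G) → ℝ such that φ := ψ + φ' − φ'∘σ is weakly Hölder continuous and one-sided, i.e., φ(x) = φ(y) whenever x_i = y_i for all i ≥ 0. Moreover, if ψ is bounded then φ is bounded. -/
open scoped ENNReal Classical

/-- The two-sided countable Markov shift. -/
abbrev CMS {V : Type*} (E : V → V → Prop) : Type _ :=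
  {x : ℤ → V // ∀ i : ℤ, E (x i) (x (i + 1))}

/-- The two-sided left shift. -/
def shift2 {V : Type*} (E : V → V → Prop) : CMS E → CMS E :=
  fun x => ⟨fun i => x.1 (i + 1), fun i => x.2 (i + 1)⟩

/-- The natural metric on `Σ(G)`. -/
noncomputable def cmsDist {V : Type*} (E : V → V → Prop) (u v : CMS E) : ℝ :=
  if u = v then 0
  else Real.exp (-(sInf {n : ℕ | ∃ i : ℤ, i.natAbs = n ∧ u.1 i ≠ v.1 i} : ℕ))

/-- `ψ` is weakly Hölder continuous: `var_n ψ ≤ Cθⁿ` for `n ≥ 2`, where the `n`-th variation is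
over pairs agreeing on coordinates `−(n−1), …, n−1`. -/
def WeaklyHolder {V : Type*} (E : V → V → Prop) (ψ : CMS E → ℝ) : Prop :=
  ∃ C : ℝ, 0 < C ∧ ∃ θ : ℝ, 0 < θ ∧ θ < 1 ∧
    ∀ n : ℕ, 2 ≤ n → ∀ x y : CMS E,
      (∀ i : ℤ, -((n : ℤ) - 1) ≤ i → i ≤ (n : ℤ) - 1 → x.1 i = y.1 i) →
      ψ x - ψ y ≤ C * θ ^ n

/-- `φ` is one-sided: it only depends on the coordinates `i ≥ 0`. -/
def OneSided {V : Type*} (E : V → V → Prop) (φ : CMS E → ℝ) : Prop :=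
  ∀ x y : CMS E, (∀ i : ℤ, 0 ≤ i → x.1 i = y.1 i) → φ x = φ y

section SinaiAux

variable {V : Type*} (E : V → V → Prop)

noncomputable def sinaiPred (hin : ∀ v : V, ∃ u : V, E u v) (v : V) : V :=
  (hin v).choose

lemma sinaiPred_spec (hin : ∀ v : V, ∃ u : V, E u v) (v : V) :
    E (sinaiPred E hin v) v := (hin v).choose_spec

noncomputable def sinaiPast (hin : ∀ v : V, ∃ u : V, E u v) (v : V) : ℕ → V
  | 0 => v
  | k + 1 => sinaiPred E hin (sinaiPast hin v k)

noncomputable def sinaiR (hin : ∀ v : V, ∃ u : V, E u v) (x : CMS E) : CMS E :=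
  ⟨fun i => if 0 ≤ i then x.1 i else sinaiPast E hin (x.1 0) i.natAbs, by
    intro i
    dsimp only
    by_cases h : 0 ≤ i
    · rw [if_pos h, if_pos (by omega)]
      exact x.2 i
    · by_cases h1 : i = -1
      · subst h1
        rw [if_neg (by omega), if_pos (by omega)]
        show E (sinaiPast E hin (x.1 0) 1) (x.1 0)
        exact sinaiPred_spec E hin _
      · rw [if_neg h, if_neg (by omega)]
        have h2 : i.natAbs = (i + 1).natAbs + 1 := by omega
        rw [h2]
        exact sinaiPred_spec E hin _⟩

lemma sinaiR_nonneg (hin : ∀ v : V, ∃ u : V, E u v) (x : CMS E) (i : ℤ) (h : 0 ≤ i) :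
    (sinaiR E hin x).1 i = x.1 i := if_pos h

lemma sinaiR_neg (hin : ∀ v : V, ∃ u : V, E u v) (x : CMS E) (i : ℤ) (h : ¬ 0 ≤ i) :
    (sinaiR E hin x).1 i = sinaiPast E hin (x.1 0) i.natAbs := if_neg h

lemma sinaiR_agree (hin : ∀ v : V, ∃ u : V, E u v) (x y : CMS E)
    (h0 : x.1 0 = y.1 0) (M : ℤ)
    (h : ∀ j : ℤ, 0 ≤ j → j ≤ M → x.1 j = y.1 j) :
    ∀ j : ℤ, j ≤ M → (sinaiR E hin x).1 j = (sinaiR E hin y).1 j := by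
  intro j hj
  by_cases h' : 0 ≤ j
  · rw [sinaiR_nonneg E hin x j h', sinaiR_nonneg E hin y j h']
    exact h j h' hj
  · rw [sinaiR_neg E hin x j h', sinaiR_neg E hin y j h', h0]

lemma shift2_iter_apply (x : CMS E) (n : ℕ) (i : ℤ) :
    ((shift2 E)^[n] x).1 i = x.1 (i + n) := by
  induction n generalizing x i with
  | zero => simp
  | succ k ih =>
    rw [Function.iterate_succ_apply, ih]
    show x.1 (i + k + 1) = x.1 (i + (k + 1 : ℕ))
    push_cast
    ring_nf

noncomputable def sinaiF (hin : ∀ v : V, ∃ u : V, E u v) (ψ : CMS E → ℝ)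
    (x : CMS E) (n : ℕ) : ℝ :=
  ψ ((shift2 E)^[n] (sinaiR E hin x)) - ψ ((shift2 E)^[n] x)

noncomputable def sinaiG (hin : ∀ v : V, ∃ u : V, E u v) (ψ : CMS E → ℝ)
    (x : CMS E) (n : ℕ) : ℝ :=
  ψ ((shift2 E)^[n + 1] (sinaiR E hin x)) - ψ ((shift2 E)^[n] (sinaiR E hin (shift2 E x)))

end SinaiAux

set_option maxHeartbeats 1000000 in
lemma sinai_core (D C s : ℝ) (hD : 0 ≤ D) (hC : 0 ≤ C) (hs0 : 0 < s) (hs1 : s < 1)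
    (t : ℕ → ℝ) (N : ℕ)
    (h1 : ∀ n, |t n| ≤ D * s ^ (8 * n))
    (h2 : ∀ n, n + 2 ≤ N → |t n| ≤ C * s ^ (8 * (N - n))) :
    |∑' n, t n| ≤ (D + C) / s / (1 - s) * s ^ N := by
  have hs1' : 0 < 1 - s := by linarith
  have hDCs : D + C ≤ (D + C) / s := by
    rw [le_div_iff₀ hs0]; nlinarith
  have key : ∀ n, |t n| ≤ ((D + C) / s * s ^ N) * s ^ n := by
    intro n
    have hpow : ∀ a b : ℕ, b ≤ a → s ^ a ≤ s ^ b := fun a b h =>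
      pow_le_pow_of_le_one hs0.le hs1.le h
    rcases le_or_gt N (7 * n) with hA | hB
    · calc |t n| ≤ D * s ^ (8 * n) := h1 n
        _ ≤ ((D + C) / s) * s ^ (N + n) := by
          apply mul_le_mul (by linarith) (hpow _ _ (by omega)) (pow_nonneg hs0.le _)
            (by positivity)
        _ = _ := by rw [pow_add, mul_assoc]
    · have hcase : (n = 0 ∧ N = 1) ∨ n + 2 ≤ N := by omega
      rcases hcase with ⟨rfl, rfl⟩ | hc
      · have := h1 0
        simp only [mul_zero, pow_zero, mul_one] at this ⊢
        calc |t 0| ≤ D := this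
          _ ≤ (D + C) / s * s ^ 1 := by
            rw [pow_one, div_mul_cancel₀ _ hs0.ne']; linarith
      · calc |t n| ≤ C * s ^ (8 * (N - n)) := h2 n hc
          _ ≤ ((D + C) / s) * s ^ (N + n) := by
            apply mul_le_mul (by linarith) (hpow _ _ (by omega)) (pow_nonneg hs0.le _)
              (by positivity)
          _ = _ := by rw [pow_add, mul_assoc]
  have hgeo : Summable (fun n : ℕ => ((D + C) / s * s ^ N) * s ^ n) :=
    (summable_geometric_of_lt_one hs0.le hs1).mul_left _
  have habs : Summable (fun n => |t n|) :=
    Summable.of_nonneg_of_le (fun n => abs_nonneg _) key hgeo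
  calc |∑' n, t n| ≤ ∑' n, |t n| := by
        have h := norm_tsum_le_tsum_norm (f := t) (by simpa [Real.norm_eq_abs] using habs)
        simpa [Real.norm_eq_abs] using h
    _ ≤ ∑' n, ((D + C) / s * s ^ N) * s ^ n := Summable.tsum_le_tsum key habs hgeo
    _ = ((D + C) / s * s ^ N) * ∑' n : ℕ, s ^ n := tsum_mul_left
    _ = ((D + C) / s * s ^ N) * (1 - s)⁻¹ := by rw [tsum_geometric_of_lt_one hs0.le hs1]
    _ = (D + C) / s / (1 - s) * s ^ N := by field_simp


/-- Sinai's Lemma for countable Markov shifts: if `ψ` is weakly Hölder continuous with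
`var₁ψ < ∞`, there is a bounded Hölder continuous `φ'` such that `φ = ψ + φ' − φ'∘σ` is weakly
Hölder continuous and one-sided; moreover if `ψ` is bounded then `φ` is bounded. -/
theorem stmt12 {V : Type*} [Countable V] (E : V → V → Prop)
    (hin : ∀ v : V, ∃ u : V, E u v) (hout : ∀ v : V, ∃ w : V, E v w)
    (ψ : CMS E → ℝ) (hψ : WeaklyHolder E ψ)
    (hvar1 : ∃ K : ℝ, ∀ x y : CMS E, x.1 0 = y.1 0 → ψ x - ψ y ≤ K) :
    ∃ φ' : CMS E → ℝ,
      (∃ K : ℝ, ∀ x : CMS E, |φ' x| ≤ K) ∧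
      (∃ C : ℝ, 0 < C ∧ ∃ α : ℝ, 0 < α ∧
        ∀ x y : CMS E, |φ' x - φ' y| ≤ C * (cmsDist E x y) ^ α) ∧
      WeaklyHolder E (fun x => ψ x + φ' x - φ' (shift2 E x)) ∧
      OneSided E (fun x => ψ x + φ' x - φ' (shift2 E x)) ∧
      ((∃ K : ℝ, ∀ x : CMS E, |ψ x| ≤ K) →
        ∃ K : ℝ, ∀ x : CMS E, |ψ x + φ' x - φ' (shift2 E x)| ≤ K) := by
  obtain ⟨C, hC, θ, hθ0, hθ1, hH⟩ := hψ
  obtain ⟨K0, hK0⟩ := hvar1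
  -- basic constants
  set K : ℝ := max K0 0 with hKdef
  have hKnn : 0 ≤ K := le_max_right _ _
  have hK : ∀ x y : CMS E, x.1 0 = y.1 0 → |ψ x - ψ y| ≤ K := by
    intro x y h
    rw [abs_sub_le_iff]
    exact ⟨(hK0 x y h).trans (le_max_left _ _), (hK0 y x h.symm).trans (le_max_left _ _)⟩
  have habs : ∀ m : ℕ, 2 ≤ m → ∀ x y : CMS E,
      (∀ i : ℤ, -((m : ℤ) - 1) ≤ i → i ≤ (m : ℤ) - 1 → x.1 i = y.1 i) →
      |ψ x - ψ y| ≤ C * θ ^ m := by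
    intro m hm x y h
    rw [abs_sub_le_iff]
    exact ⟨hH m hm x y h, hH m hm y x (fun i h1 h2 => (h i h1 h2).symm)⟩
  -- the parameter s with s^8 = θ
  set s : ℝ := θ ^ ((8 : ℝ)⁻¹) with hsdef
  have hs0 : 0 < s := Real.rpow_pos_of_pos hθ0 _
  have hs1 : s < 1 := Real.rpow_lt_one hθ0.le hθ1 (by norm_num)
  have hs8 : ∀ n : ℕ, θ ^ n = s ^ (8 * n) := by
    intro n
    have h8 : s ^ (8 : ℕ) = θ := by
      rw [hsdef, ← Real.rpow_natCast (θ ^ ((8:ℝ)⁻¹)) 8, ← Real.rpow_mul hθ0.le]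
      norm_num
    rw [← h8, ← pow_mul]
  set D : ℝ := K + C with hDdef
  have hD : 0 < D := by positivity
  -- bounds on F
  have hFb : ∀ (x : CMS E) (n : ℕ), |sinaiF E hin ψ x n| ≤ D * θ ^ n := by
    intro x n
    match n with
    | 0 =>
      have h0 : ((shift2 E)^[0] (sinaiR E hin x)).1 0 = ((shift2 E)^[0] x).1 0 := by
        rw [shift2_iter_apply, shift2_iter_apply]
        exact sinaiR_nonneg E hin x _ (by omega)
      calc |sinaiF E hin ψ x 0| ≤ K := hK _ _ h0
        _ ≤ D * θ ^ 0 := by rw [pow_zero, mul_one]; linarith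
    | n + 1 =>
      have hagr : ∀ i : ℤ, -((n + 2 : ℕ) : ℤ) + 1 ≤ i + 1 →
          True → True := fun _ _ _ => trivial
      have h1 : |sinaiF E hin ψ x (n+1)| ≤ C * θ ^ (n + 2) := by
        apply habs (n + 2) (by omega)
        intro i hi1 hi2
        rw [shift2_iter_apply, shift2_iter_apply]
        apply sinaiR_nonneg
        push_cast at hi1 hi2 ⊢
        omega
      calc |sinaiF E hin ψ x (n+1)| ≤ C * θ ^ (n + 2) := h1
        _ = (C * θ) * θ ^ (n + 1) := by ring
        _ ≤ D * θ ^ (n + 1) := by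
          apply mul_le_mul_of_nonneg_right _ (pow_nonneg hθ0.le _)
          nlinarith
  -- bounds on G
  have hGb : ∀ (x : CMS E) (n : ℕ), |sinaiG E hin ψ x n| ≤ D * θ ^ n := by
    intro x n
    match n with
    | 0 =>
      have h0 : ((shift2 E)^[0 + 1] (sinaiR E hin x)).1 0
          = ((shift2 E)^[0] (sinaiR E hin (shift2 E x))).1 0 := by
        rw [shift2_iter_apply, shift2_iter_apply]
        rw [sinaiR_nonneg E hin x _ (by omega), sinaiR_nonneg E hin _ _ (by omega)]
        show x.1 (0 + (1:ℕ)) = x.1 ((0 + (0:ℕ)) + 1)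
        norm_num
      calc |sinaiG E hin ψ x 0| ≤ K := hK _ _ h0
        _ ≤ D * θ ^ 0 := by rw [pow_zero, mul_one]; linarith
    | n + 1 =>
      have h1 : |sinaiG E hin ψ x (n+1)| ≤ C * θ ^ (n + 2) := by
        apply habs (n + 2) (by omega)
        intro i hi1 hi2
        rw [shift2_iter_apply, shift2_iter_apply]
        rw [sinaiR_nonneg E hin x _ (by push_cast at hi1 ⊢; omega),
          sinaiR_nonneg E hin _ _ (by push_cast at hi1 ⊢; omega)]
        show x.1 (i + ((n:ℤ)+1+1)) = x.1 ((i + ((n:ℤ)+1)) + 1)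
        ring_nf
      calc |sinaiG E hin ψ x (n+1)| ≤ C * θ ^ (n + 2) := h1
        _ = (C * θ) * θ ^ (n + 1) := by ring
        _ ≤ D * θ ^ (n + 1) := by
          apply mul_le_mul_of_nonneg_right _ (pow_nonneg hθ0.le _)
          nlinarith
  -- summability
  have hsummable : ∀ u : ℕ → ℝ, (∀ n, |u n| ≤ D * θ ^ n) → Summable u := by
    intro u hu
    apply Summable.of_abs
    exact Summable.of_nonneg_of_le (fun n => abs_nonneg _) hu
      ((summable_geometric_of_lt_one hθ0.le hθ1).mul_left D)
  have hFs : ∀ x : CMS E, Summable (sinaiF E hin ψ x) := fun x => hsummable _ (hFb x)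
  have hGs : ∀ x : CMS E, Summable (sinaiG E hin ψ x) := fun x => hsummable _ (hGb x)
  -- the key difference estimate for φ'
  have hdiff : ∀ (x y : CMS E) (N : ℕ),
      (∀ i : ℤ, -(N : ℤ) < i → i < (N : ℤ) → x.1 i = y.1 i) →
      |(∑' n, sinaiF E hin ψ x n) - ∑' n, sinaiF E hin ψ y n|
        ≤ (2 * D + 2 * C) / s / (1 - s) * s ^ N := by
    intro x y N hxy
    rw [← Summable.tsum_sub (hFs x) (hFs y)]
    apply sinai_core (2 * D) (2 * C) s (by positivity) (by positivity) hs0 hs1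
    · intro n
      rw [← hs8]
      calc |sinaiF E hin ψ x n - sinaiF E hin ψ y n|
          ≤ |sinaiF E hin ψ x n| + |sinaiF E hin ψ y n| := abs_sub _ _
        _ ≤ D * θ ^ n + D * θ ^ n := add_le_add (hFb x n) (hFb y n)
        _ = 2 * D * θ ^ n := by ring
    · intro n hn
      rw [← hs8]
      have hNn : ((N - n : ℕ) : ℤ) = (N : ℤ) - n := by omega
      have h0 : x.1 0 = y.1 0 := hxy 0 (by omega) (by omega)
      have hnn : ∀ j : ℤ, 0 ≤ j → j ≤ (N : ℤ) - 1 → x.1 j = y.1 j :=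
        fun j hj1 hj2 => hxy j (by omega) (by omega)
      have e1 : |ψ ((shift2 E)^[n] (sinaiR E hin x)) - ψ ((shift2 E)^[n] (sinaiR E hin y))|
          ≤ C * θ ^ (N - n) := by
        apply habs _ (by omega)
        intro i hi1 hi2
        rw [shift2_iter_apply, shift2_iter_apply]
        exact sinaiR_agree E hin x y h0 ((N : ℤ) - 1) hnn (i + n) (by omega)
      have e2 : |ψ ((shift2 E)^[n] x) - ψ ((shift2 E)^[n] y)| ≤ C * θ ^ (N - n) := by
        apply habs _ (by omega)
        intro i hi1 hi2
        rw [shift2_iter_apply, shift2_iter_apply]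
        exact hxy (i + n) (by omega) (by omega)
      have hrw : sinaiF E hin ψ x n - sinaiF E hin ψ y n
          = (ψ ((shift2 E)^[n] (sinaiR E hin x)) - ψ ((shift2 E)^[n] (sinaiR E hin y)))
            - (ψ ((shift2 E)^[n] x) - ψ ((shift2 E)^[n] y)) := by
        simp only [sinaiF]; ring
      rw [hrw]
      calc _ ≤ |ψ ((shift2 E)^[n] (sinaiR E hin x)) - ψ ((shift2 E)^[n] (sinaiR E hin y))|
            + |ψ ((shift2 E)^[n] x) - ψ ((shift2 E)^[n] y)| := abs_sub _ _
        _ ≤ C * θ ^ (N - n) + C * θ ^ (N - n) := add_le_add e1 e2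
        _ = 2 * C * θ ^ (N - n) := by ring
  -- uniform bound for φ'
  have hbound : ∀ x : CMS E, |∑' n, sinaiF E hin ψ x n| ≤ (D + 0) / s / (1 - s) := by
    intro x
    have := sinai_core D 0 s hD.le le_rfl hs0 hs1 (sinaiF E hin ψ x) 0
      (fun n => by rw [← hs8]; exact hFb x n) (fun n hn => by omega)
    simpa using this
  -- the representation φ(x) = ψ(r x) + ∑ G
  have hrep : ∀ x : CMS E,
      ψ x + (∑' n, sinaiF E hin ψ x n) - (∑' n, sinaiF E hin ψ (shift2 E x) n)
        = ψ (sinaiR E hin x) + ∑' n, sinaiG E hin ψ x n := by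
    intro x
    have hFsh : Summable (fun n => sinaiF E hin ψ x (n + 1)) :=
      (summable_nat_add_iff 1).mpr (hFs x)
    have hptw : ∀ n, sinaiF E hin ψ (shift2 E x) n
        = sinaiF E hin ψ x (n + 1) - sinaiG E hin ψ x n := by
      intro n
      simp only [sinaiF, sinaiG]
      rw [← Function.iterate_succ_apply]
      ring
    have hshift : (∑' n, sinaiF E hin ψ (shift2 E x) n)
        = (∑' n, sinaiF E hin ψ x (n + 1)) - ∑' n, sinaiG E hin ψ x n := by
      rw [tsum_congr hptw]
      exact Summable.tsum_sub hFsh (hGs x)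
    rw [hshift, Summable.tsum_eq_zero_add (hFs x)]
    have hF0 : sinaiF E hin ψ x 0 = ψ (sinaiR E hin x) - ψ x := by
      simp [sinaiF]
    rw [hF0]
    ring
  -- assemble
  refine ⟨fun x => ∑' n, sinaiF E hin ψ x n,
    ⟨(D + 0) / s / (1 - s), fun x => hbound x⟩, ?_, ?_, ?_, ?_⟩
  · -- Hölder continuity of φ'
    have hα : (0 : ℝ) < -Real.log s := neg_pos.mpr (Real.log_neg hs0 hs1)
    refine ⟨(2 * D + 2 * C) / s / (1 - s),
      div_pos (div_pos (by positivity) hs0) (by linarith), -Real.log s, hα, ?_⟩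
    intro x y
    dsimp only
    by_cases hxy : x = y
    · subst hxy
      simp [cmsDist, Real.zero_rpow hα.ne']
    · have hxd : ∃ i : ℤ, x.1 i ≠ y.1 i := by
        by_contra h
        push_neg at h
        exact hxy (Subtype.ext (funext h))
      obtain ⟨i0, hi0⟩ := hxd
      set N : ℕ := sInf {n : ℕ | ∃ i : ℤ, i.natAbs = n ∧ x.1 i ≠ y.1 i} with hNdef
      have hagree : ∀ i : ℤ, -(N : ℤ) < i → i < (N : ℤ) → x.1 i = y.1 i := by
        intro i h1 h2
        by_contra hne
        have hmem : i.natAbs ∈ {n : ℕ | ∃ i : ℤ, i.natAbs = n ∧ x.1 i ≠ y.1 i} :=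
          ⟨i, rfl, hne⟩
        have := Nat.sInf_le hmem
        omega
      have h1 := hdiff x y N hagree
      have hdval : cmsDist E x y = Real.exp (-(N : ℝ)) := by
        rw [cmsDist, if_neg hxy]
      have hrpow : Real.exp (-(N : ℝ)) ^ (-Real.log s) = s ^ N := by
        rw [Real.rpow_def_of_pos (Real.exp_pos _), Real.log_exp,
          show (-(N : ℝ)) * (-Real.log s) = (N : ℝ) * Real.log s by ring,
          Real.exp_nat_mul, Real.exp_log hs0]
      rw [hdval, hrpow]
      exact h1
  · -- weak Hölder continuity of φ
    have hCpos : 0 < C + (2 * D + 2 * C) / s / (1 - s) / s := by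
      have h1 : 0 < (2 * D + 2 * C) / s / (1 - s) / s :=
        div_pos (div_pos (div_pos (by positivity) hs0) (by linarith)) hs0
      linarith
    refine ⟨C + (2 * D + 2 * C) / s / (1 - s) / s, hCpos, s, hs0, hs1, ?_⟩
    intro m hm x y hxy
    dsimp only
    rw [hrep x, hrep y]
    have hm' : (2 : ℤ) ≤ (m : ℤ) := by exact_mod_cast hm
    have h0 : x.1 0 = y.1 0 := hxy 0 (by omega) (by omega)
    have hfun : ∀ j : ℤ, 0 ≤ j → j ≤ (m : ℤ) - 1 → x.1 j = y.1 j :=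
      fun j hj1 hj2 => hxy j (by omega) hj2
    have e1 : |ψ (sinaiR E hin x) - ψ (sinaiR E hin y)| ≤ C * θ ^ m := by
      apply habs m hm
      intro i hi1 hi2
      exact sinaiR_agree E hin x y h0 ((m : ℤ) - 1) hfun i hi2
    have e2 : |(∑' n, sinaiG E hin ψ x n) - ∑' n, sinaiG E hin ψ y n|
        ≤ (2 * D + 2 * C) / s / (1 - s) * s ^ (m - 1) := by
      rw [← Summable.tsum_sub (hGs x) (hGs y)]
      apply sinai_core (2 * D) (2 * C) s (by positivity) (by positivity) hs0 hs1
      · intro n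
        rw [← hs8]
        calc |sinaiG E hin ψ x n - sinaiG E hin ψ y n|
            ≤ |sinaiG E hin ψ x n| + |sinaiG E hin ψ y n| := abs_sub _ _
          _ ≤ D * θ ^ n + D * θ ^ n := add_le_add (hGb x n) (hGb y n)
          _ = 2 * D * θ ^ n := by ring
      · intro n hn
        rw [← hs8]
        have h0' : (shift2 E x).1 0 = (shift2 E y).1 0 := by
          show x.1 (0 + 1) = y.1 (0 + 1)
          exact hxy (0 + 1) (by omega) (by omega)
        have hfun' : ∀ j : ℤ, 0 ≤ j → j ≤ (m : ℤ) - 2 →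
            (shift2 E x).1 j = (shift2 E y).1 j := by
          intro j hj1 hj2
          show x.1 (j + 1) = y.1 (j + 1)
          exact hxy (j + 1) (by omega) (by omega)
        have p1 : |ψ ((shift2 E)^[n + 1] (sinaiR E hin x))
            - ψ ((shift2 E)^[n + 1] (sinaiR E hin y))| ≤ C * θ ^ (m - 1 - n) := by
          apply habs _ (by omega)
          intro i hi1 hi2
          rw [shift2_iter_apply, shift2_iter_apply]
          exact sinaiR_agree E hin x y h0 ((m : ℤ) - 1) hfun _ (by omega)
        have p2 : |ψ ((shift2 E)^[n] (sinaiR E hin (shift2 E x)))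
            - ψ ((shift2 E)^[n] (sinaiR E hin (shift2 E y)))| ≤ C * θ ^ (m - 1 - n) := by
          apply habs _ (by omega)
          intro i hi1 hi2
          rw [shift2_iter_apply, shift2_iter_apply]
          exact sinaiR_agree E hin _ _ h0' ((m : ℤ) - 2) hfun' _ (by omega)
        have hrw : sinaiG E hin ψ x n - sinaiG E hin ψ y n
            = (ψ ((shift2 E)^[n + 1] (sinaiR E hin x))
                - ψ ((shift2 E)^[n + 1] (sinaiR E hin y)))
              - (ψ ((shift2 E)^[n] (sinaiR E hin (shift2 E x)))
                - ψ ((shift2 E)^[n] (sinaiR E hin (shift2 E y)))) := by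
          simp only [sinaiG]; ring
        rw [hrw]
        calc _ ≤ |ψ ((shift2 E)^[n + 1] (sinaiR E hin x))
              - ψ ((shift2 E)^[n + 1] (sinaiR E hin y))|
            + |ψ ((shift2 E)^[n] (sinaiR E hin (shift2 E x)))
              - ψ ((shift2 E)^[n] (sinaiR E hin (shift2 E y)))| := abs_sub _ _
          _ ≤ C * θ ^ (m - 1 - n) + C * θ ^ (m - 1 - n) := add_le_add p1 p2
          _ = 2 * C * θ ^ (m - 1 - n) := by ring
    have hsm : s ^ m = s ^ (m - 1) * s := by
      rw [← pow_succ]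
      congr 1
      omega
    have t1 : C * θ ^ m ≤ C * s ^ m := by
      rw [hs8 m]
      exact mul_le_mul_of_nonneg_left
        (pow_le_pow_of_le_one hs0.le hs1.le (by omega)) hC.le
    have t2 : (C + (2 * D + 2 * C) / s / (1 - s) / s) * s ^ m
        = C * s ^ m + (2 * D + 2 * C) / s / (1 - s) * s ^ (m - 1) := by
      rw [add_mul, hsm]
      congr 1
      rw [show (2 * D + 2 * C) / s / (1 - s) / s * (s ^ (m - 1) * s)
          = ((2 * D + 2 * C) / s / (1 - s) / s * s) * s ^ (m - 1) from by ring,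
        div_mul_cancel₀ _ hs0.ne']
    rw [t2]
    have hle1 : ψ (sinaiR E hin x) - ψ (sinaiR E hin y)
        ≤ |ψ (sinaiR E hin x) - ψ (sinaiR E hin y)| := le_abs_self _
    have hle2 : (∑' n, sinaiG E hin ψ x n) - ∑' n, sinaiG E hin ψ y n
        ≤ |(∑' n, sinaiG E hin ψ x n) - ∑' n, sinaiG E hin ψ y n| := le_abs_self _
    linarith
  · -- one-sidedness
    intro x y h
    dsimp only
    have hr : sinaiR E hin x = sinaiR E hin y := by
      apply Subtype.ext
      funext i
      by_cases hi : 0 ≤ i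
      · rw [sinaiR_nonneg E hin x i hi, sinaiR_nonneg E hin y i hi]
        exact h i hi
      · rw [sinaiR_neg E hin x i hi, sinaiR_neg E hin y i hi, h 0 le_rfl]
    have hrs : sinaiR E hin (shift2 E x) = sinaiR E hin (shift2 E y) := by
      apply Subtype.ext
      funext i
      by_cases hi : 0 ≤ i
      · rw [sinaiR_nonneg E hin _ i hi, sinaiR_nonneg E hin _ i hi]
        show x.1 (i + 1) = y.1 (i + 1)
        exact h (i + 1) (by omega)
      · rw [sinaiR_neg E hin _ i hi, sinaiR_neg E hin _ i hi]
        show sinaiPast E hin (x.1 (0 + 1)) i.natAbs = sinaiPast E hin (y.1 (0 + 1)) i.natAbs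
        rw [h (0 + 1) (by omega)]
    rw [hrep x, hrep y, hr]
    congr 1
    apply tsum_congr
    intro n
    simp only [sinaiG]
    rw [hr, hrs]
  · -- boundedness of φ when ψ is bounded
    rintro ⟨Kψ, hKψ⟩
    refine ⟨Kψ + (D + 0) / s / (1 - s) + (D + 0) / s / (1 - s), fun x => ?_⟩
    dsimp only
    calc |ψ x + (∑' n, sinaiF E hin ψ x n) - ∑' n, sinaiF E hin ψ (shift2 E x) n|
        ≤ |ψ x + ∑' n, sinaiF E hin ψ x n| + |∑' n, sinaiF E hin ψ (shift2 E x) n| :=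
          abs_sub _ _
      _ ≤ |ψ x| + |∑' n, sinaiF E hin ψ x n| + |∑' n, sinaiF E hin ψ (shift2 E x) n| := by
          linarith [abs_add_le (ψ x) (∑' n, sinaiF E hin ψ x n)]
      _ ≤ Kψ + (D + 0) / s / (1 - s) + (D + 0) / s / (1 - s) := by
          linarith [hKψ x, hbound x, hbound (shift2 E x)]
end

section
/- Suppose that for a potential ψ on a countable Markov shift Σ(G), every topologically transitive sub-shift Σ(H) (H a subgraph of G) carries at most one equilibrium measure for ψ, and the support of such a measure is all of Σ(H). Then ψ has at most countably many ergodic equilibrium measures on Σ(G). -/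
set_option linter.unusedSectionVars false
set_option linter.unusedTactic false


open MeasureTheory
open scoped ENNReal

/-- Paths in a graph with edge relation `E'`. -/
def hasPath {V : Type*} (E' : V → V → Prop) (a b : V) (n : ℕ) : Prop :=
  ∃ f : ℕ → V, f 0 = a ∧ f n = b ∧ ∀ i < n, E' (f i) (f (i + 1))

/-- The vertices of the subgraph with edge relation `E'`. -/
def verts {V : Type*} (E' : V → V → Prop) : Set V :=
  {a | (∃ b, E' a b) ∨ (∃ b, E' b a)}

/-- The subgraph with edge relation `E'` is topologically transitive: any vertex connects to
any other by a path. -/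
def TransGraph {V : Type*} (E' : V → V → Prop) : Prop :=
  ∀ a ∈ verts E', ∀ b ∈ verts E', ∃ n : ℕ, 1 ≤ n ∧ hasPath E' a b n

/-- The sub-shift `Σ(H) ⊆ Σ(G)` determined by a sub-collection of edges `E' ≤ E`. -/
def subShift {V : Type*} (E E' : V → V → Prop) : Set (CMS E) :=
  {x | ∀ i : ℤ, E' (x.1 i) (x.1 (i + 1))}

/-- `μ` has full support on the sub-shift `Σ(H)`: every nonempty cylinder of `Σ(H)` has
positive measure. -/
def FullSupportOn {V : Type*} [MeasurableSpace V] (E E' : V → V → Prop) (μ : Measure (CMS E)) : Prop :=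
  ∀ x ∈ subShift E E', ∀ m n : ℤ, m ≤ n →
    0 < μ {y ∈ subShift E E' | ∀ i : ℤ, m ≤ i → i ≤ n → y.1 i = x.1 i}

namespace Stmt19Aux

open MeasureTheory Set

variable {V : Type*} [Countable V] [MeasurableSpace V] [DiscreteMeasurableSpace V]
  {E : V → V → Prop} {μ : Measure (CMS E)}

/-- The graph of edges seen by `μ` with positive probability at time `0`. -/
def Egr (E : V → V → Prop) (μ : Measure (CMS E)) : V → V → Prop :=
  fun a b => 0 < μ {x : CMS E | x.1 0 = a ∧ x.1 1 = b}

lemma shift_iter (n : ℕ) (x : CMS E) (i : ℤ) :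
    ((shift2 E)^[n] x).1 i = x.1 (i + n) := by
  induction n generalizing x with
  | zero => simp
  | succ n ih =>
    rw [Function.iterate_succ_apply, ih]
    show x.1 (i + n + 1) = _
    congr 1
    push_cast
    ring

lemma meas_coord (i : ℤ) : Measurable fun x : CMS E => x.1 i :=
  (measurable_pi_apply i).comp measurable_subtype_coe

lemma meas_eq (i : ℤ) (a : V) : MeasurableSet {x : CMS E | x.1 i = a} :=
  (meas_coord i) (MeasurableSet.singleton a)

lemma meas_pair (i : ℤ) (a b : V) :
    MeasurableSet {x : CMS E | x.1 i = a ∧ x.1 (i + 1) = b} :=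
  (meas_eq i a).inter (meas_eq (i + 1) b)

lemma meas_pair0 (a b : V) : MeasurableSet {x : CMS E | x.1 0 = a ∧ x.1 1 = b} :=
  (meas_eq 0 a).inter (meas_eq 1 b)

lemma measure_single_shift (hinv : MeasurePreserving (shift2 E) μ μ) (i : ℤ) (a : V) :
    μ {x : CMS E | x.1 i = a} = μ {x : CMS E | x.1 0 = a} := by
  rcases le_or_gt 0 i with h | h
  · obtain ⟨n, rfl⟩ : ∃ n : ℕ, i = (n : ℤ) := ⟨i.toNat, (Int.toNat_of_nonneg h).symm⟩
    have : (shift2 E)^[n] ⁻¹' {x : CMS E | x.1 0 = a} = {x : CMS E | x.1 (n : ℤ) = a} := by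
      ext x
      simp [Set.mem_preimage, shift_iter]
    rw [← this, (hinv.iterate n).measure_preimage (meas_eq 0 a).nullMeasurableSet]
  · obtain ⟨n, hn⟩ : ∃ n : ℕ, (n : ℤ) = -i := ⟨(-i).toNat, Int.toNat_of_nonneg (by omega)⟩
    have : (shift2 E)^[n] ⁻¹' {x : CMS E | x.1 i = a} = {x : CMS E | x.1 0 = a} := by
      ext x
      simp only [Set.mem_preimage, Set.mem_setOf_eq, shift_iter]
      rw [show i + (n : ℤ) = 0 by omega]
    rw [← this, (hinv.iterate n).measure_preimage (meas_eq i a).nullMeasurableSet]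

lemma measure_pair_shift (hinv : MeasurePreserving (shift2 E) μ μ) (i : ℤ) (a b : V) :
    μ {x : CMS E | x.1 i = a ∧ x.1 (i + 1) = b} = μ {x : CMS E | x.1 0 = a ∧ x.1 1 = b} := by
  rcases le_or_gt 0 i with h | h
  · obtain ⟨n, rfl⟩ : ∃ n : ℕ, i = (n : ℤ) := ⟨i.toNat, (Int.toNat_of_nonneg h).symm⟩
    have : (shift2 E)^[n] ⁻¹' {x : CMS E | x.1 0 = a ∧ x.1 1 = b}
        = {x : CMS E | x.1 (n : ℤ) = a ∧ x.1 ((n : ℤ) + 1) = b} := by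
      ext x
      simp only [Set.mem_preimage, Set.mem_setOf_eq, shift_iter]
      rw [zero_add, add_comm (1 : ℤ) (n : ℤ)]
    rw [← this, (hinv.iterate n).measure_preimage (meas_pair0 a b).nullMeasurableSet]
  · obtain ⟨n, hn⟩ : ∃ n : ℕ, (n : ℤ) = -i := ⟨(-i).toNat, Int.toNat_of_nonneg (by omega)⟩
    have : (shift2 E)^[n] ⁻¹' {x : CMS E | x.1 i = a ∧ x.1 (i + 1) = b}
        = {x : CMS E | x.1 0 = a ∧ x.1 1 = b} := by
      ext x
      simp only [Set.mem_preimage, Set.mem_setOf_eq, shift_iter]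
      rw [show i + (n : ℤ) = 0 by omega, show i + 1 + (n : ℤ) = 1 by omega]
    rw [← this, (hinv.iterate n).measure_preimage (meas_pair i a b).nullMeasurableSet]


lemma Egr_le (a b : V) (h : Egr E μ a b) : E a b := by
  obtain ⟨x, hx⟩ := nonempty_of_measure_ne_zero h.ne'
  have := x.2 0
  rw [zero_add, hx.1, hx.2] at this
  exact this

lemma subshift_full (hprob : IsProbabilityMeasure μ)
    (hinv : MeasurePreserving (shift2 E) μ μ) :
    μ (subShift E (Egr E μ)) = 1 := by
  have hcompl : μ (subShift E (Egr E μ))ᶜ = 0 := by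
    have hsub : (subShift E (Egr E μ))ᶜ ⊆
        ⋃ q : ℤ × V × V, {x : CMS E | x.1 q.1 = q.2.1 ∧ x.1 (q.1 + 1) = q.2.2 ∧
          μ {y : CMS E | y.1 0 = q.2.1 ∧ y.1 1 = q.2.2} = 0} := by
      intro x hx
      simp only [Set.mem_compl_iff, subShift, Set.mem_setOf_eq, not_forall] at hx
      obtain ⟨i, hi⟩ := hx
      refine Set.mem_iUnion.mpr ⟨⟨i, x.1 i, x.1 (i + 1)⟩, rfl, rfl, ?_⟩
      simpa [Egr, pos_iff_ne_zero, not_not] using hi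
    refine measure_mono_null hsub (measure_iUnion_null fun q => ?_)
    by_cases h : μ {y : CMS E | y.1 0 = q.2.1 ∧ y.1 1 = q.2.2} = 0
    · refine measure_mono_null (t := {x : CMS E | x.1 q.1 = q.2.1 ∧ x.1 (q.1 + 1) = q.2.2})
        (fun x hx => ⟨hx.1, hx.2.1⟩) ?_
      rw [measure_pair_shift hinv]
      exact h
    · have hemp : {x : CMS E | x.1 q.1 = q.2.1 ∧ x.1 (q.1 + 1) = q.2.2 ∧
          μ {y : CMS E | y.1 0 = q.2.1 ∧ y.1 1 = q.2.2} = 0} = ∅ := by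
        ext x
        simp only [Set.mem_setOf_eq, Set.mem_empty_iff_false, iff_false]
        tauto
      rw [hemp]
      exact measure_empty
  have h1 : (1 : ℝ≥0∞) ≤ μ (subShift E (Egr E μ)) := by
    have := measure_union_le (μ := μ) (subShift E (Egr E μ)) (subShift E (Egr E μ))ᶜ
    rw [Set.union_compl_self, measure_univ, hcompl, add_zero] at this
    exact this
  exact le_antisymm prob_le_one h1

lemma exists_pos_of_iUnion {ι : Type*} [Countable ι] {s : ι → Set (CMS E)} {t : Set (CMS E)}
    (hsub : t ⊆ ⋃ i, s i) (ht : 0 < μ t) : ∃ i, 0 < μ (s i) := by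
  by_contra h
  push_neg at h
  simp only [le_zero_iff] at h
  exact absurd (measure_mono_null hsub (measure_iUnion_null h)) ht.ne'

lemma vert_pos (hinv : MeasurePreserving (shift2 E) μ μ) {a : V}
    (ha : a ∈ verts (Egr E μ)) : 0 < μ {x : CMS E | x.1 0 = a} := by
  rcases ha with ⟨b, hb⟩ | ⟨b, hb⟩
  · exact lt_of_lt_of_le hb (measure_mono fun x hx => hx.1)
  · have : (0 : ℝ≥0∞) < μ {x : CMS E | x.1 1 = a} :=
      lt_of_lt_of_le hb (measure_mono fun x hx => hx.2)
    rwa [measure_single_shift hinv 1 a] at this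

lemma ergodic_mixing {A B : Set (CMS E)} (herg : Ergodic (shift2 E) μ)
    (hprob : IsProbabilityMeasure μ)
    (hA : MeasurableSet A) (hB : MeasurableSet B) (hA0 : 0 < μ A) (hB0 : 0 < μ B) :
    ∃ n : ℕ, 1 ≤ n ∧ 0 < μ (A ∩ (shift2 E)^[n] ⁻¹' B) := by
  set C : Set (CMS E) := ⋃ n : ℕ, (shift2 E)^[n + 1] ⁻¹' B with hC
  have hCm : MeasurableSet C :=
    MeasurableSet.iUnion fun n => (herg.measurable.iterate (n + 1)) hB
  have hpre : (shift2 E) ⁻¹' C ⊆ C := by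
    rw [hC, Set.preimage_iUnion]
    refine Set.iUnion_subset fun n => ?_
    have : (shift2 E) ⁻¹' ((shift2 E)^[n + 1] ⁻¹' B) = (shift2 E)^[n + 1 + 1] ⁻¹' B := by
      rw [← Set.preimage_comp, ← Function.iterate_succ]
    rw [this]
    exact Set.subset_iUnion (fun m => (shift2 E)^[m + 1] ⁻¹' B) (n + 1)
  have hor := herg.ae_empty_or_univ_of_preimage_ae_le hCm.nullMeasurableSet
    (HasSubset.Subset.eventuallyLE hpre)
  have hCpos : 0 < μ C := by
    refine lt_of_lt_of_le ?_ (measure_mono (Set.subset_iUnion _ 0))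
    rw [(herg.toMeasurePreserving.iterate 1).measure_preimage hB.nullMeasurableSet]
    exact hB0
  have hC1 : μ Cᶜ = 0 := by
    rcases hor with h | h
    · exact absurd (MeasureTheory.ae_eq_empty.mp h) hCpos.ne'
    · exact MeasureTheory.ae_eq_univ.mp h
  have : 0 < μ (A ∩ C) := by rw [measure_inter_conull hC1]; exact hA0
  rw [hC, Set.inter_iUnion] at this
  obtain ⟨n, hn⟩ := exists_pos_of_iUnion (subset_refl _) this
  exact ⟨n + 1, Nat.le_add_left 1 n, hn⟩

lemma Egr_trans (herg : Ergodic (shift2 E) μ) (hprob : IsProbabilityMeasure μ) :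
    TransGraph (Egr E μ) := by
  intro a ha b hb
  have hinv := herg.toMeasurePreserving
  obtain ⟨n, hn1, hn⟩ := ergodic_mixing herg hprob (meas_eq 0 a) (meas_eq 0 b)
    (vert_pos hinv ha) (vert_pos hinv hb)
  have hD : {x : CMS E | x.1 0 = a} ∩ (shift2 E)^[n] ⁻¹' {x : CMS E | x.1 0 = b}
      ⊆ ⋃ w : Fin (n + 1) → V,
        ({x : CMS E | ∀ j : Fin (n + 1), x.1 (j.val : ℤ) = w j} ∩
          ({x : CMS E | x.1 0 = a} ∩ (shift2 E)^[n] ⁻¹' {x : CMS E | x.1 0 = b})) := by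
    intro x hx
    exact Set.mem_iUnion.mpr ⟨fun j => x.1 (j.val : ℤ), fun j => rfl, hx⟩
  obtain ⟨w, hw⟩ := exists_pos_of_iUnion hD hn
  obtain ⟨x, hx⟩ := nonempty_of_measure_ne_zero hw.ne'
  refine ⟨n, hn1, fun i => x.1 (i : ℤ), by simpa using hx.2.1, ?_, ?_⟩
  · have := hx.2.2
    simp only [Set.mem_preimage, Set.mem_setOf_eq, shift_iter, zero_add] at this
    exact this
  · intro i hi
    have hsub2 : {y : CMS E | ∀ j : Fin (n + 1), y.1 (j.val : ℤ) = w j} ⊆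
        {y : CMS E | y.1 (i : ℤ) = x.1 (i : ℤ) ∧ y.1 ((i : ℤ) + 1) = x.1 ((i : ℤ) + 1)} := by
      intro y hy
      have h1 := hy ⟨i, by omega⟩
      have h2 := hy ⟨i + 1, by omega⟩
      have hx1 := hx.1 ⟨i, by omega⟩
      have hx2 := hx.1 ⟨i + 1, by omega⟩
      simp only [Fin.val_mk] at h1 h2 hx1 hx2
      push_cast at h2 hx2
      exact ⟨h1.trans hx1.symm, h2.trans hx2.symm⟩
    show 0 < μ {y : CMS E | y.1 0 = x.1 (i : ℤ) ∧ y.1 1 = x.1 ((i + 1 : ℕ) : ℤ)}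
    have hc : ((i + 1 : ℕ) : ℤ) = (i : ℤ) + 1 := by push_cast; ring
    rw [hc, ← measure_pair_shift hinv (i : ℤ)]
    exact lt_of_lt_of_le hw (measure_mono (Set.inter_subset_left.trans hsub2))

lemma verts_nonempty (hprob : IsProbabilityMeasure μ) : ∃ a, a ∈ verts (Egr E μ) := by
  have huniv : (Set.univ : Set (CMS E)) ⊆
      ⋃ p : V × V, {x : CMS E | x.1 0 = p.1 ∧ x.1 1 = p.2} := by
    intro x _
    exact Set.mem_iUnion.mpr ⟨(x.1 0, x.1 1), rfl, rfl⟩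
  have h0 : (0 : ℝ≥0∞) < μ Set.univ := by simp
  obtain ⟨p, hp⟩ := exists_pos_of_iUnion huniv h0
  exact ⟨p.1, Or.inl ⟨p.2, hp⟩⟩

lemma hasPath_mono {W : Type*} {E1 E2 : W → W → Prop} (h : ∀ a b, E1 a b → E2 a b)
    {a b : W} {n : ℕ} : hasPath E1 a b n → hasPath E2 a b n := by
  rintro ⟨f, h0, hn, he⟩
  exact ⟨f, h0, hn, fun i hi => h _ _ (he i hi)⟩

lemma hasPath_concat {W : Type*} {E' : W → W → Prop} {a v b : W} {m n : ℕ} (hm : 1 ≤ m)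
    (h1 : hasPath E' a v m) (h2 : hasPath E' v b n) : hasPath E' a b (m + n) := by
  obtain ⟨f, hf0, hfm, hfe⟩ := h1
  obtain ⟨g, hg0, hgn, hge⟩ := h2
  refine ⟨fun i => if i < m then f i else g (i - m), ?_, ?_, ?_⟩
  · have : (0 : ℕ) < m := hm
    simp [this, hf0]
  · have : ¬ (m + n < m) := by omega
    simp only [this, if_false]
    rw [Nat.add_sub_cancel_left, hgn]
  · intro i hi
    by_cases h1' : i + 1 < m
    · have hlt : i < m := by omega
      simp only [if_pos hlt, if_pos h1']
      exact hfe i (by omega)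
    · by_cases h2' : i < m
      · have hi1 : i + 1 = m := by omega
        simp only [if_pos h2', if_neg h1']
        rw [hi1, Nat.sub_self, hg0, ← hfm, ← hi1]
        exact hfe i (by omega)
      · simp only [if_neg h2', if_neg h1']
        have hstep : i + 1 - m = (i - m) + 1 := by omega
        rw [hstep]
        exact hge (i - m) (by omega)

lemma verts_union {E1 E2 : V → V → Prop} :
    verts (fun a b => E1 a b ∨ E2 a b) = verts E1 ∪ verts E2 := by
  ext a
  simp only [verts, Set.mem_setOf_eq, Set.mem_union, exists_or]
  tauto

end Stmt19Aux

/-- If every topologically transitive sub-shift `Σ(H)` of `Σ(G)` carries at most one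
equilibrium measure for `ψ`, and the support of such a measure is all of `Σ(H)`, then `ψ` has
at most countably many ergodic equilibrium measures.  (The set of equilibrium measures of `ψ`
is abstracted as a set `EqM` of shift-invariant probability measures satisfying these two
hypotheses.) -/



theorem stmt19 {V : Type*} [Countable V] [MeasurableSpace V] [DiscreteMeasurableSpace V]
    (E : V → V → Prop) (EqM : Set (Measure (CMS E)))
    (hmem : ∀ μ ∈ EqM, IsProbabilityMeasure μ ∧ MeasurePreserving (shift2 E) μ μ)
    (huniq : ∀ E' : V → V → Prop, (∀ a b, E' a b → E a b) → TransGraph E' →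
      Set.Subsingleton {μ | μ ∈ EqM ∧ μ (subShift E E') = 1} ∧
      ∀ μ ∈ EqM, μ (subShift E E') = 1 → FullSupportOn E E' μ) :
    Set.Countable {μ | μ ∈ EqM ∧ Ergodic (shift2 E) μ} := by
  classical
  have key : ∀ μ₁ ∈ {μ | μ ∈ EqM ∧ Ergodic (shift2 E) μ},
      ∀ μ₂ ∈ {μ | μ ∈ EqM ∧ Ergodic (shift2 E) μ}, ∀ v : V,
      v ∈ verts (Stmt19Aux.Egr E μ₁) → v ∈ verts (Stmt19Aux.Egr E μ₂) → μ₁ = μ₂ := by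
    intro μ₁ h₁ μ₂ h₂ v hv₁ hv₂
    obtain ⟨hm₁, he₁⟩ := h₁
    obtain ⟨hm₂, he₂⟩ := h₂
    obtain ⟨hp₁, hi₁⟩ := hmem μ₁ hm₁
    obtain ⟨hp₂, hi₂⟩ := hmem μ₂ hm₂
    set E'' : V → V → Prop :=
      fun a b => Stmt19Aux.Egr E μ₁ a b ∨ Stmt19Aux.Egr E μ₂ a b with hE''
    have hle : ∀ a b, E'' a b → E a b := fun a b h =>
      h.elim (Stmt19Aux.Egr_le a b) (Stmt19Aux.Egr_le a b)
    have ht1 := Stmt19Aux.Egr_trans he₁ hp₁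
    have ht2 := Stmt19Aux.Egr_trans he₂ hp₂
    have hmono1 : ∀ {a b : V} {n : ℕ}, hasPath (Stmt19Aux.Egr E μ₁) a b n → hasPath E'' a b n :=
      fun h => Stmt19Aux.hasPath_mono (fun _ _ => Or.inl) h
    have hmono2 : ∀ {a b : V} {n : ℕ}, hasPath (Stmt19Aux.Egr E μ₂) a b n → hasPath E'' a b n :=
      fun h => Stmt19Aux.hasPath_mono (fun _ _ => Or.inr) h
    have htrans : TransGraph E'' := by
      intro a ha b hb
      rw [hE'', Stmt19Aux.verts_union] at ha hb
      rcases ha with ha | ha <;> rcases hb with hb | hb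
      · obtain ⟨n, h1, h2⟩ := ht1 a ha b hb
        exact ⟨n, h1, hmono1 h2⟩
      · obtain ⟨n₁, hn₁, p₁⟩ := ht1 a ha v hv₁
        obtain ⟨n₂, hn₂, p₂⟩ := ht2 v hv₂ b hb
        exact ⟨n₁ + n₂, by omega, Stmt19Aux.hasPath_concat hn₁ (hmono1 p₁) (hmono2 p₂)⟩
      · obtain ⟨n₁, hn₁, p₁⟩ := ht2 a ha v hv₂
        obtain ⟨n₂, hn₂, p₂⟩ := ht1 v hv₁ b hb
        exact ⟨n₁ + n₂, by omega, Stmt19Aux.hasPath_concat hn₁ (hmono2 p₁) (hmono1 p₂)⟩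
      · obtain ⟨n, h1, h2⟩ := ht2 a ha b hb
        exact ⟨n, h1, hmono2 h2⟩
    have hfull : ∀ (ν : Measure (CMS E)), IsProbabilityMeasure ν →
        MeasurePreserving (shift2 E) ν ν →
        (subShift E (Stmt19Aux.Egr E ν) ⊆ subShift E E'') → ν (subShift E E'') = 1 := by
      intro ν hp hi hsub
      have h1 := Stmt19Aux.subshift_full hp hi
      exact le_antisymm prob_le_one (h1 ▸ measure_mono hsub)
    have hfull₁ : μ₁ (subShift E E'') = 1 :=
      hfull μ₁ hp₁ hi₁ (fun x hx i => Or.inl (hx i))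
    have hfull₂ : μ₂ (subShift E E'') = 1 :=
      hfull μ₂ hp₂ hi₂ (fun x hx i => Or.inr (hx i))
    exact (huniq E'' hle htrans).1 ⟨hm₁, hfull₁⟩ ⟨hm₂, hfull₂⟩
  have hvn : ∀ μ : {μ | μ ∈ EqM ∧ Ergodic (shift2 E) μ},
      ∃ a, a ∈ verts (Stmt19Aux.Egr E μ.1) :=
    fun μ => Stmt19Aux.verts_nonempty (hmem μ.1 μ.2.1).1
  choose f hf using hvn
  have hinj : Function.Injective f := by
    intro μ₁ μ₂ h
    exact Subtype.ext (key μ₁.1 μ₁.2 μ₂.1 μ₂.2 (f μ₁) (hf μ₁) (h ▸ hf μ₂))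
  exact Set.countable_coe_iff.mp hinj.countable
end
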